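/- arXiv:0805.0706 — 3 statements merged into one kernel-verified Lean document; each statement's English description precedes it below -/
import Mathlib

section
/- Define C_n = \inf\{\mathcal{E}_0(f,f) : f \in L^2(B_n), f(0) = 1\}. Then the principal eigenvalue with a = 0 satisfies \lambda_n^{\circ} \ge C_{2n} / \sum_{x \in B_n} \tau_x. -/
open Classical

noncomputable section

/-- Nearest-neighbour adjacency on `ℤ^d` (ℓ¹ distance one). -/
def Adj {d : ℕ} (x y : Fin d → ℤ) : Prop := (∑ i, |x i - y i|) = 1

/-- The box `B_n = {-n,…,n}^d` as a set. -/
def boxS (d n : ℕ) : Set (Fin d → ℤ) := {x | ∀ i, |x i| ≤ (n : ℤ)}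

/-- The box `B_n = {-n,…,n}^d` as a finset. -/
def boxF (d n : ℕ) : Finset (Fin d → ℤ) :=
  Finset.Icc (fun _ => -(n : ℤ)) (fun _ => (n : ℤ))

/-- Dirichlet form with `a = 0`: `ℰ₀(f,f) = (1/2) ∑_{x∼y} (f(y)-f(x))²`. -/
def dirForm0 {d : ℕ} (f : (Fin d → ℤ) → ℝ) : ℝ :=
  (1/2) * ∑ᶠ p : (Fin d → ℤ) × (Fin d → ℤ),
    if Adj p.1 p.2 then (f p.2 - f p.1)^2 else 0

/-- Weighted norm `(f,f) = ∑_x f(x)² τ_x`. -/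
def wNorm {d : ℕ} (τ : (Fin d → ℤ) → ℝ) (f : (Fin d → ℤ) → ℝ) : ℝ :=
  ∑ᶠ x, f x ^ 2 * τ x

/-- The principal Dirichlet eigenvalue `λ_n°` (case `a = 0`). -/
def eig0 (d : ℕ) (τ : (Fin d → ℤ) → ℝ) (n : ℕ) : ℝ :=
  sInf {r | ∃ f : (Fin d → ℤ) → ℝ,
    (∀ x ∉ boxS d n, f x = 0) ∧ f ≠ 0 ∧ r = dirForm0 f / wNorm τ f}

/-- Effective conductance `C_n = inf {ℰ₀(f,f) : f ∈ L²(B_n), f(0)=1}`. -/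
def effCond (d n : ℕ) : ℝ :=
  sInf {r | ∃ f : (Fin d → ℤ) → ℝ,
    (∀ x ∉ boxS d n, f x = 0) ∧ f 0 = 1 ∧ r = dirForm0 f}

/-! ### Auxiliary lemmas -/

lemma mem_boxF_iff {d n : ℕ} {x : Fin d → ℤ} : x ∈ boxF d n ↔ x ∈ boxS d n := by
  simp only [boxF, Finset.mem_Icc, Pi.le_def, boxS, Set.mem_setOf_eq, abs_le, ← forall_and]

lemma adj_step {d : ℕ} {x y : Fin d → ℤ} (hA : Adj x y) (i : Fin d) : |x i - y i| ≤ 1 := by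
  have h := Finset.single_le_sum (f := fun j => |x j - y j|)
    (fun j _ => abs_nonneg _) (Finset.mem_univ i)
  rw [Adj] at hA
  simpa only [hA] using h

lemma adj_box {d m : ℕ} {x y : Fin d → ℤ} (hA : Adj x y) (hx : x ∈ boxS d m) :
    y ∈ boxS d (m + 1) := by
  intro i
  have h1 : |x i - y i| ≤ 1 := adj_step hA i
  have h2 : |x i| ≤ (m : ℤ) := hx i
  have h3 : |y i| ≤ |x i| + |x i - y i| := by
    have := abs_add_le (x i - (x i - y i)) (x i - y i)
    simp at this
    calc |y i| = |x i - (x i - y i)| := by ring_nf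
    _ ≤ |x i| + |x i - y i| := abs_sub _ _
  push_cast
  omega

lemma adj_translate {d : ℕ} (x y v : Fin d → ℤ) : Adj (x + v) (y + v) ↔ Adj x y := by
  simp [Adj, Pi.add_apply, add_sub_add_right_eq_sub]

lemma supp_subset {d m : ℕ} {f : (Fin d → ℤ) → ℝ} (hf : ∀ x ∉ boxS d m, f x = 0) :
    Function.support (fun p : (Fin d → ℤ) × (Fin d → ℤ) =>
      if Adj p.1 p.2 then (f p.2 - f p.1)^2 else 0) ⊆
      ↑(boxF d (m+1) ×ˢ boxF d (m+1)) := by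
  intro p hp
  simp only [Function.mem_support] at hp
  by_cases hA : Adj p.1 p.2
  · have hne : f p.2 - f p.1 ≠ 0 := by
      intro h; apply hp; simp [hA, h]
    have hone : p.1 ∈ boxS d m ∨ p.2 ∈ boxS d m := by
      by_contra h
      push_neg at h
      apply hne
      rw [hf _ h.1, hf _ h.2, sub_zero]
    have hboth : p.1 ∈ boxS d (m+1) ∧ p.2 ∈ boxS d (m+1) := by
      rcases hone with h | h
      · exact ⟨fun i => le_trans (h i) (by push_cast; omega), adj_box hA h⟩
      · have hA' : Adj p.2 p.1 := by
          rw [Adj] at hA ⊢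
          rw [← hA]
          exact Finset.sum_congr rfl fun i _ => abs_sub_comm _ _
        exact ⟨adj_box hA' h, fun i => le_trans (h i) (by push_cast; omega)⟩
    simp only [Finset.coe_product, Set.mem_prod]
    exact ⟨mem_boxF_iff.2 hboth.1, mem_boxF_iff.2 hboth.2⟩
  · exact absurd (by simp [hA]) hp

lemma dirForm0_nonneg {d : ℕ} (f : (Fin d → ℤ) → ℝ) : 0 ≤ dirForm0 f := by
  apply mul_nonneg (by norm_num)
  apply finsum_nonneg
  intro p
  split <;> [exact sq_nonneg _; exact le_rfl]

lemma dirForm0_translate {d : ℕ} (f : (Fin d → ℤ) → ℝ) (v : Fin d → ℤ) :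
    dirForm0 (fun x => f (x + v)) = dirForm0 f := by
  unfold dirForm0
  congr 1
  have key : ∀ p : (Fin d → ℤ) × (Fin d → ℤ),
      (if Adj p.1 p.2 then (f (p.2 + v) - f (p.1 + v))^2 else 0) =
      (if Adj (p.1 + v) (p.2 + v) then (f (p.2 + v) - f (p.1 + v))^2 else 0) :=
    fun p => if_congr (adj_translate p.1 p.2 v).symm rfl rfl
  exact (finsum_congr key).trans
    (finsum_comp_equiv ((Equiv.addRight v).prodCongr (Equiv.addRight v))
      (f := fun q : (Fin d → ℤ) × (Fin d → ℤ) =>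
        if Adj q.1 q.2 then (f q.2 - f q.1)^2 else 0))

lemma dirForm0_smul {d m : ℕ} {f : (Fin d → ℤ) → ℝ} (hf : ∀ x ∉ boxS d m, f x = 0) (c : ℝ) :
    dirForm0 (fun x => c * f x) = c^2 * dirForm0 f := by
  unfold dirForm0
  have h1 : ∀ p : (Fin d → ℤ) × (Fin d → ℤ),
      (if Adj p.1 p.2 then (c * f p.2 - c * f p.1)^2 else 0) =
      c^2 * (if Adj p.1 p.2 then (f p.2 - f p.1)^2 else 0) := by
    intro p; split <;> ring
  rw [finsum_congr h1, ← mul_finsum _ _]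
  ring

lemma wNorm_eq_sum {d n : ℕ} (τ : (Fin d → ℤ) → ℝ) {f : (Fin d → ℤ) → ℝ}
    (hf : ∀ x ∉ boxS d n, f x = 0) :
    wNorm τ f = ∑ x ∈ boxF d n, f x ^ 2 * τ x := by
  apply finsum_eq_sum_of_support_subset
  intro x hx
  simp only [Function.mem_support] at hx
  rw [Finset.mem_coe, mem_boxF_iff]
  by_contra h
  exact hx (by rw [hf x h]; ring)

/-- `λ_n° ≥ C_{2n} / ∑_{x ∈ B_n} τ_x`. -/
theorem eig0_ge_cond (d : ℕ) (hd : 1 ≤ d) (τ : (Fin d → ℤ) → ℝ)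
    (hτ : ∀ x, 0 < τ x) (n : ℕ) :
    eig0 d τ n ≥ effCond d (2*n) / ∑ x ∈ boxF d n, τ x := by
  set S := ∑ x ∈ boxF d n, τ x with hS
  have h0box : ∀ m : ℕ, (0 : Fin d → ℤ) ∈ boxS d m := by
    intro m i; simp
  have hSpos : 0 < S := Finset.sum_pos (fun x _ => hτ x) ⟨0, mem_boxF_iff.2 (h0box n)⟩
  -- the delta function at 0
  set δ : (Fin d → ℤ) → ℝ := fun x => if x = 0 then 1 else 0 with hδ
  have hδsupp : ∀ m : ℕ, ∀ x ∉ boxS d m, δ x = 0 := by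
    intro m x hx
    have : x ≠ 0 := fun h => hx (h ▸ h0box m)
    simp [hδ, this]
  have hδ0 : δ 0 = 1 := by simp [hδ]
  -- effCond set is bounded below by 0 and nonempty
  have hbdd : BddBelow {r | ∃ f : (Fin d → ℤ) → ℝ,
      (∀ x ∉ boxS d (2*n), f x = 0) ∧ f 0 = 1 ∧ r = dirForm0 f} := by
    refine ⟨0, fun r hr => ?_⟩
    obtain ⟨f, _, _, hr⟩ := hr
    exact hr ▸ dirForm0_nonneg f
  have hCne : {r | ∃ f : (Fin d → ℤ) → ℝ,
      (∀ x ∉ boxS d (2*n), f x = 0) ∧ f 0 = 1 ∧ r = dirForm0 f}.Nonempty :=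
    ⟨dirForm0 δ, δ, hδsupp (2*n), hδ0, rfl⟩
  have hCnn : 0 ≤ effCond d (2*n) := by
    apply le_csInf hCne
    rintro r ⟨f, _, _, rfl⟩
    exact dirForm0_nonneg f
  -- now bound eig0 from below
  apply le_csInf
  · refine ⟨dirForm0 δ / wNorm τ δ, δ, hδsupp n, ?_, rfl⟩
    intro h
    have := congrFun h 0
    rw [hδ0] at this
    norm_num at this
  · rintro r ⟨f, hfsupp, hfne, rfl⟩
    -- f is nonzero somewhere in the box
    obtain ⟨y, hy⟩ : ∃ y, f y ≠ 0 := by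
      by_contra h
      push_neg at h
      exact hfne (funext h)
    have hybox : y ∈ boxF d n := by
      rw [mem_boxF_iff]
      by_contra h
      exact hy (hfsupp y h)
    -- a maximizer of f²
    obtain ⟨x₀, hx₀mem, hx₀max⟩ := Finset.exists_max_image (boxF d n) (fun x => (f x)^2)
      ⟨y, hybox⟩
    set M := f x₀ with hM
    have hfy2 : 0 < f y ^ 2 := by
      have := abs_pos.2 hy
      nlinarith [sq_abs (f y)]
    have hMne : M ≠ 0 := by
      intro h
      have h2 := hx₀max y hybox
      rw [h] at h2
      nlinarith
    have hM2 : (0:ℝ) < M^2 := by positivity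
    -- the translated, rescaled test function
    set g : (Fin d → ℤ) → ℝ := fun x => (1/M) * f (x + x₀) with hg
    have hx₀S : x₀ ∈ boxS d n := mem_boxF_iff.1 hx₀mem
    have htrsupp : ∀ x ∉ boxS d (2*n), f (x + x₀) = 0 := by
      intro x hx
      apply hfsupp
      intro hmem
      apply hx
      intro i
      have h1 := hmem i
      have h2 := hx₀S i
      simp only [Pi.add_apply] at h1
      have h3 : |x i| ≤ |x i + x₀ i| + |x₀ i| := by
        calc |x i| = |(x i + x₀ i) - x₀ i| := by ring_nf
        _ ≤ |x i + x₀ i| + |x₀ i| := abs_sub _ _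
      push_cast
      omega
    have hgsupp : ∀ x ∉ boxS d (2*n), g x = 0 := by
      intro x hx
      rw [hg]
      simp [htrsupp x hx]
    have hg0 : g 0 = 1 := by
      rw [hg]
      simp only [zero_add]
      rw [← hM]
      field_simp
    have hgdir : dirForm0 g = dirForm0 f / M^2 := by
      rw [hg, dirForm0_smul (m := 2*n) htrsupp, dirForm0_translate]
      field_simp
    have hCle : effCond d (2*n) ≤ dirForm0 f / M^2 := by
      rw [← hgdir]
      exact csInf_le hbdd ⟨g, hgsupp, hg0, rfl⟩
    have hnum : effCond d (2*n) * M^2 ≤ dirForm0 f := by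
      rw [← le_div_iff₀ hM2]
      exact hCle
    -- bound the weighted norm
    have hwle : wNorm τ f ≤ M^2 * S := by
      rw [wNorm_eq_sum τ hfsupp, hS, Finset.mul_sum]
      apply Finset.sum_le_sum
      intro x hx
      exact mul_le_mul_of_nonneg_right (hx₀max x hx) (hτ x).le
    have hwpos : 0 < wNorm τ f := by
      rw [wNorm_eq_sum τ hfsupp]
      apply Finset.sum_pos'
      · intro x _; exact mul_nonneg (sq_nonneg _) (hτ x).le
      · exact ⟨y, hybox, mul_pos hfy2 (hτ y)⟩
    calc effCond d (2*n) / S = (effCond d (2*n) * M^2) / (M^2 * S) := by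
          field_simp
      _ ≤ dirForm0 f / wNorm τ f :=
          div_le_div₀ (dirForm0_nonneg f) hnum hwpos hwle
end
end

section
/- Let (Z_x)_{x \in B} be independent centred real random variables indexed by a finite set B, and let (g_x)_{x \in B} be nonnegative reals. Then for every integer m \ge 1, \mathbb{E}[(\sum_{x\in B} g_x Z_x)^{2m}] \le C(m) \sum_{k=1}^{m} \sum_{e_1+\dots+e_k = 2m, e_i \ge 2} \prod_{i=1}^{k} (\sum_{x \in B} g_x^{e_i} \sup_{y \in B}|\mathbb{E}[Z_y^{e_i}]|), where C(m) depends only on m. -/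
open Classical MeasureTheory ProbabilityTheory

noncomputable section

private lemma indep_prod_integral {Ω : Type} {mΩ : MeasurableSpace Ω} {P : Measure Ω}
    [IsProbabilityMeasure P] {ι : Type} {W : ι → Ω → ℝ}
    (hind : iIndepFun W P)
    (hmeas : ∀ x, Measurable (W x)) :
    ∀ s : Finset ι, (∀ x ∈ s, Integrable (W x) P) →
      Integrable (fun ω => ∏ x ∈ s, W x ω) P ∧
      ∫ ω, ∏ x ∈ s, W x ω ∂P = ∏ x ∈ s, ∫ ω, W x ω ∂P := by
  intro s
  induction s using Finset.cons_induction with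
  | empty => intro _; simp
  | cons a s ha ih =>
    intro hint
    obtain ⟨ih1, ih2⟩ := ih (fun x hx => hint x (Finset.mem_cons_of_mem hx))
    have hprodeq : (∏ j ∈ s, W j) = fun ω => ∏ x ∈ s, W x ω :=
      funext fun ω => Finset.prod_apply ω s W
    have hIF : IndepFun (W a) (fun ω => ∏ x ∈ s, W x ω) P := by
      have h := (hind.indepFun_finset_prod_of_notMem hmeas ha).symm
      rwa [hprodeq] at h
    have ha1 : Integrable (W a) P := hint a (Finset.mem_cons_self a s)
    have hmul : Integrable (fun ω => W a ω * ∏ x ∈ s, W x ω) P :=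
      hIF.integrable_mul ha1 ih1
    constructor
    · simpa only [Finset.prod_cons] using hmul
    · simp only [Finset.prod_cons]
      rw [show (∫ ω, W a ω * ∏ x ∈ s, W x ω ∂P)
          = (∫ ω, W a ω ∂P) * ∫ ω, ∏ x ∈ s, W x ω ∂P from
          hIF.integral_fun_mul_eq_mul_integral ha1.aestronglyMeasurable ih1.aestronglyMeasurable, ih2]

/-- moment bound for weighted sums of independent centred random
variables: for every `m ≥ 1` there is `C = C(m)` such that
`E[(∑ g_x Z_x)^{2m}] ≤ C ∑_{k=1}^m ∑_{e₁+⋯+e_k=2m, eᵢ≥2} ∏ᵢ (∑_x g_x^{eᵢ} sup_y |E[Z_y^{eᵢ}]|)`. -/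
theorem moment_expansion_bound (m : ℕ) (hm : 1 ≤ m) :
    ∃ C > (0:ℝ), ∀ (Ω : Type) (_ : MeasurableSpace Ω) (P : Measure Ω),
      IsProbabilityMeasure P →
      ∀ (ι : Type) [MeasurableSpace ι] (B : Finset ι) (Z : ι → Ω → ℝ) (g : ι → ℝ),
      (∀ x, Measurable (Z x)) →
      iIndepFun Z P →
      (∀ x ∈ B, ∫ ω, Z x ω ∂P = 0) →
      (∀ x, 0 ≤ g x) →
      (∀ x ∈ B, ∀ j ≤ 2*m, Integrable (fun ω => (Z x ω)^j) P) →
      ∫ ω, (∑ x ∈ B, g x * Z x ω)^(2*m) ∂P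
        ≤ C * ∑ k ∈ Finset.Icc 1 m,
            ∑ e ∈ (Finset.univ : Finset (Fin k → Fin (2*m+1))).filter
                (fun e => (∑ i, (e i : ℕ)) = 2*m ∧ ∀ i, 2 ≤ (e i : ℕ)),
              ∏ i : Fin k,
                ∑ x ∈ B, g x ^ (e i : ℕ) * (⨆ y ∈ B, |∫ ω, (Z y ω)^((e i : ℕ)) ∂P|) := by
  refine ⟨((2*m).factorial : ℝ), by positivity, ?_⟩
  intro Ω mΩ P hP ι mι B Z g hZmeas hZind hZcen hg hZint
  haveI : IsProbabilityMeasure P := hP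
  classical
  set M : ℕ → ℝ := fun j => ⨆ y ∈ B, |∫ ω, (Z y ω)^j ∂P| with hM
  have hMnonneg : ∀ j, 0 ≤ M j := fun j =>
    Real.iSup_nonneg fun y => Real.iSup_nonneg fun _ => abs_nonneg _
  have hMge : ∀ (j : ℕ) (x : ι), x ∈ B → |∫ ω, (Z x ω)^j ∂P| ≤ M j := by
    intro j x hx
    have hbdd : BddAbove (Set.range fun y => ⨆ _ : y ∈ B, |∫ ω, (Z y ω)^j ∂P|) := by
      apply BddAbove.mono ?_
        (((B.finite_toSet.image fun y => |∫ ω, (Z y ω)^j ∂P|).insert 0).bddAbove)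
      rintro _ ⟨y, rfl⟩
      show (⨆ _ : y ∈ B, |∫ ω, (Z y ω)^j ∂P|) ∈ _
      by_cases hy : y ∈ B
      · rw [ciSup_pos hy]
        exact Set.mem_insert_of_mem _ ⟨y, hy, rfl⟩
      · rw [ciSup_neg hy]
        simp [Real.sSup_empty]
    have h2 : (⨆ _ : x ∈ B, |∫ ω, (Z x ω)^j ∂P|)
        ≤ ⨆ y, ⨆ _ : y ∈ B, |∫ ω, (Z y ω)^j ∂P| := le_ciSup hbdd x
    rw [ciSup_pos hx] at h2
    exact h2
  -- abbreviations
  set A : Finset (ι → ℕ) := (B.piAntidiag (2*m)).filter (fun d => ∀ x ∈ B, d x ≠ 1) with hA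
  -- basic facts about members of piAntidiag
  have hdle : ∀ d ∈ B.piAntidiag (2*m), ∀ x ∈ B, d x ≤ 2*m := by
    intro d hd x hx
    rw [Finset.mem_piAntidiag] at hd
    exact hd.1 ▸ Finset.single_le_sum (fun i _ => Nat.zero_le _) hx
  have hWint : ∀ d ∈ B.piAntidiag (2*m),
      Integrable (fun ω => ∏ x ∈ B, (Z x ω)^(d x)) P ∧
      ∫ ω, ∏ x ∈ B, (Z x ω)^(d x) ∂P = ∏ x ∈ B, ∫ ω, (Z x ω)^(d x) ∂P := by
    intro d hd
    exact indep_prod_integral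
      (hZind.comp (fun x => (· ^ d x)) (fun x => measurable_id.pow_const (d x)))
      (fun x => (hZmeas x).pow_const (d x)) B
      (fun x hx => hZint x hx (d x) (hdle d hd x hx))
  -- Step 1 : expansion of the integral
  have key : ∫ ω, (∑ x ∈ B, g x * Z x ω)^(2*m) ∂P
      = ∑ d ∈ B.piAntidiag (2*m), (Nat.multinomial B d : ℝ) *
          ((∏ x ∈ B, g x ^ d x) * ∏ x ∈ B, ∫ ω, (Z x ω)^(d x) ∂P) := by
    have hpoint : (fun ω => (∑ x ∈ B, g x * Z x ω)^(2*m))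
        = fun ω => ∑ d ∈ B.piAntidiag (2*m), (Nat.multinomial B d : ℝ) *
            ((∏ x ∈ B, g x ^ d x) * ∏ x ∈ B, (Z x ω)^(d x)) := by
      funext ω
      rw [Finset.sum_pow_eq_sum_piAntidiag]
      refine Finset.sum_congr rfl fun d hd => ?_
      rw [← Finset.prod_mul_distrib]
      simp_rw [mul_pow]
    rw [hpoint, integral_finset_sum _
      (fun d hd => (((hWint d hd).1).const_mul _).const_mul _)]
    refine Finset.sum_congr rfl fun d hd => ?_
    rw [integral_const_mul, integral_const_mul, (hWint d hd).2]
  -- Step 2 : terms with a multiplicity equal to 1 vanish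
  have hzero : ∑ d ∈ B.piAntidiag (2*m), (Nat.multinomial B d : ℝ) *
        ((∏ x ∈ B, g x ^ d x) * ∏ x ∈ B, ∫ ω, (Z x ω)^(d x) ∂P)
      = ∑ d ∈ A, (Nat.multinomial B d : ℝ) *
        ((∏ x ∈ B, g x ^ d x) * ∏ x ∈ B, ∫ ω, (Z x ω)^(d x) ∂P) := by
    refine (Finset.sum_filter_of_ne ?_).symm
    intro d _ hne x hx hdx
    apply hne
    have hZx : ∫ ω, (Z x ω)^(d x) ∂P = 0 := by
      rw [hdx]
      simp only [pow_one]
      exact hZcen x hx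
    rw [Finset.prod_eq_zero (f := fun x => ∫ ω, (Z x ω)^(d x) ∂P) hx hZx, mul_zero, mul_zero]
  -- Step 3 : bound each good term
  have hgoodbound : ∀ d ∈ A,
      (Nat.multinomial B d : ℝ) *
        ((∏ x ∈ B, g x ^ d x) * ∏ x ∈ B, ∫ ω, (Z x ω)^(d x) ∂P)
      ≤ ((2*m).factorial : ℝ) *
        ∏ x ∈ B.filter (fun x => d x ≠ 0), (g x ^ d x * M (d x)) := by
    intro d hd
    rw [hA, Finset.mem_filter] at hd
    obtain ⟨hdmem, hdgood⟩ := hd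
    have hsub : B.filter (fun x => d x ≠ 0) ⊆ B := Finset.filter_subset _ _
    have hPg : (∏ x ∈ B, g x ^ d x)
        = ∏ x ∈ B.filter (fun x => d x ≠ 0), g x ^ d x :=
      (Finset.prod_filter_of_ne (p := fun x => d x ≠ 0) fun x _ h h0 => h (by rw [h0, pow_zero])).symm
    have hPi : (∏ x ∈ B, ∫ ω, (Z x ω)^(d x) ∂P)
        = ∏ x ∈ B.filter (fun x => d x ≠ 0), ∫ ω, (Z x ω)^(d x) ∂P := by
      refine (Finset.prod_filter_of_ne (p := fun x => d x ≠ 0) fun x _ h h0 => h ?_).symm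
      rw [h0]
      simp
    have hN : (Nat.multinomial B d : ℝ) ≤ ((2*m).factorial : ℝ) := by
      have hdvd : Nat.multinomial B d ∣ (2*m).factorial := by
        rw [Finset.mem_piAntidiag] at hdmem
        exact ⟨∏ x ∈ B, (d x).factorial,
          by rw [← hdmem.1, ← Nat.multinomial_spec, Nat.mul_comm]⟩
      exact_mod_cast Nat.le_of_dvd (Nat.factorial_pos _) hdvd
    rw [hPg, hPi]
    have hgprod : 0 ≤ ∏ x ∈ B.filter (fun x => d x ≠ 0), g x ^ d x :=
      Finset.prod_nonneg fun x _ => pow_nonneg (hg x) _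
    have h1 : (∏ x ∈ B.filter (fun x => d x ≠ 0), ∫ ω, (Z x ω)^(d x) ∂P)
        ≤ ∏ x ∈ B.filter (fun x => d x ≠ 0), M (d x) := by
      calc (∏ x ∈ B.filter (fun x => d x ≠ 0), ∫ ω, (Z x ω)^(d x) ∂P)
          ≤ |∏ x ∈ B.filter (fun x => d x ≠ 0), ∫ ω, (Z x ω)^(d x) ∂P| := le_abs_self _
        _ = ∏ x ∈ B.filter (fun x => d x ≠ 0), |∫ ω, (Z x ω)^(d x) ∂P| :=
            Finset.abs_prod _ _
        _ ≤ ∏ x ∈ B.filter (fun x => d x ≠ 0), M (d x) :=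
            Finset.prod_le_prod (fun x _ => abs_nonneg _)
              (fun x hx => hMge (d x) x (hsub hx))
    calc (Nat.multinomial B d : ℝ) *
          ((∏ x ∈ B.filter (fun x => d x ≠ 0), g x ^ d x) *
            ∏ x ∈ B.filter (fun x => d x ≠ 0), ∫ ω, (Z x ω)^(d x) ∂P)
        ≤ (Nat.multinomial B d : ℝ) *
          ((∏ x ∈ B.filter (fun x => d x ≠ 0), g x ^ d x) *
            ∏ x ∈ B.filter (fun x => d x ≠ 0), M (d x)) := by
          exact mul_le_mul_of_nonneg_left
            (mul_le_mul_of_nonneg_left h1 hgprod) (Nat.cast_nonneg _)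
      _ = (Nat.multinomial B d : ℝ) *
            ∏ x ∈ B.filter (fun x => d x ≠ 0), (g x ^ d x * M (d x)) := by
          rw [Finset.prod_mul_distrib]
      _ ≤ ((2*m).factorial : ℝ) *
            ∏ x ∈ B.filter (fun x => d x ≠ 0), (g x ^ d x * M (d x)) :=
          mul_le_mul_of_nonneg_right hN
            (Finset.prod_nonneg fun x _ =>
              mul_nonneg (pow_nonneg (hg x) _) (hMnonneg _))
  -- Step 4 : combinatorial injection into the RHS index set
  set t : (Σ k : ℕ, (Fin k → Fin (2*m+1)) × (Fin k → ι)) → ℝ :=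
    fun p => ∏ i, g (p.2.2 i) ^ ((p.2.1 i : ℕ)) * M ((p.2.1 i : ℕ)) with ht
  set S : Finset (Σ k : ℕ, (Fin k → Fin (2*m+1)) × (Fin k → ι)) :=
    (Finset.Icc 1 m).sigma (fun k =>
      ((Finset.univ : Finset (Fin k → Fin (2*m+1))).filter
        (fun e => (∑ i, (e i : ℕ)) = 2*m ∧ ∀ i, 2 ≤ (e i : ℕ))) ×ˢ
      (Fintype.piFinset fun _ : Fin k => B)) with hS
  have htnonneg : ∀ p, 0 ≤ t p := fun p =>
    Finset.prod_nonneg fun i _ => mul_nonneg (pow_nonneg (hg _) _) (hMnonneg _)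
  -- the map φ
  set φ : (ι → ℕ) → (Σ k : ℕ, (Fin k → Fin (2*m+1)) × (Fin k → ι)) :=
    fun d => ⟨(B.filter fun x => d x ≠ 0).card,
      (fun i => ⟨d (((B.filter fun x => d x ≠ 0).equivFin).symm i) % (2*m+1),
        Nat.mod_lt _ (Nat.succ_pos _)⟩,
       fun i => (((B.filter fun x => d x ≠ 0).equivFin).symm i : ι))⟩ with hφ
  -- facts about good d
  have hfacts : ∀ d ∈ A,
      (∀ x, x ∉ B.filter (fun x => d x ≠ 0) → d x = 0) ∧
      (∀ x ∈ B.filter (fun x => d x ≠ 0), 2 ≤ d x) ∧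
      (∑ x ∈ B.filter (fun x => d x ≠ 0), d x = 2*m) := by
    intro d hd
    rw [hA, Finset.mem_filter] at hd
    obtain ⟨hdmem, hdgood⟩ := hd
    rw [Finset.mem_piAntidiag] at hdmem
    refine ⟨?_, ?_, ?_⟩
    · intro x hx
      by_contra h0
      exact hx (Finset.mem_filter.2 ⟨hdmem.2 x h0, h0⟩)
    · intro x hx
      rw [Finset.mem_filter] at hx
      have := hdgood x hx.1
      omega
    · rw [Finset.sum_filter_of_ne fun x _ h => h]
      exact hdmem.1
  have hfinj : ∀ d : ι → ℕ, Function.Injective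
      (fun i => (((B.filter fun x => d x ≠ 0).equivFin).symm i : ι)) :=
    fun d => Subtype.val_injective.comp (Equiv.injective _)
  have hfmem : ∀ (d : ι → ℕ) (i), (((B.filter fun x => d x ≠ 0).equivFin).symm i : ι)
      ∈ B.filter (fun x => d x ≠ 0) := fun d i => Finset.coe_mem _
  have hdle' : ∀ d ∈ A, ∀ x ∈ B.filter (fun x => d x ≠ 0), d x < 2*m+1 := by
    intro d hd x hx
    rw [hA, Finset.mem_filter] at hd
    have := hdle d hd.1 x ((Finset.filter_subset _ _) hx)
    omega
  -- values of e-components are just d values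
  have hecast : ∀ d ∈ A, ∀ i,
      (d (((B.filter fun x => d x ≠ 0).equivFin).symm i : ι) % (2*m+1))
        = d (((B.filter fun x => d x ≠ 0).equivFin).symm i : ι) := by
    intro d hd i
    exact Nat.mod_eq_of_lt (hdle' d hd _ (hfmem d i))
  -- term equality
  have hterm : ∀ d ∈ A,
      (∏ x ∈ B.filter (fun x => d x ≠ 0), (g x ^ d x * M (d x))) = t (φ d) := by
    intro d hd
    rw [ht, hφ]
    simp only
    have h2 : ∀ i : Fin (B.filter fun x => d x ≠ 0).card,
        g ((((B.filter fun x => d x ≠ 0).equivFin).symm i : ι)) ^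
            ((d (((B.filter fun x => d x ≠ 0).equivFin).symm i : ι)) % (2*m+1)) *
          M ((d (((B.filter fun x => d x ≠ 0).equivFin).symm i : ι)) % (2*m+1))
        = g ((((B.filter fun x => d x ≠ 0).equivFin).symm i : ι)) ^
            (d (((B.filter fun x => d x ≠ 0).equivFin).symm i : ι)) *
          M (d (((B.filter fun x => d x ≠ 0).equivFin).symm i : ι)) := by
      intro i
      rw [hecast d hd i]
    rw [Finset.prod_congr rfl (fun i _ => h2 i)]
    rw [Equiv.prod_comp ((B.filter fun x => d x ≠ 0).equivFin).symm
      (fun a : (B.filter fun x => d x ≠ 0) => g (a : ι) ^ d (a : ι) * M (d (a : ι)))]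
    exact (Finset.prod_coe_sort _ _).symm
  -- membership
  have hmem : ∀ d ∈ A, φ d ∈ S := by
    intro d hd
    obtain ⟨hsupp, hge2, hsum⟩ := hfacts d hd
    have hsumfin : ∑ i : Fin (B.filter fun x => d x ≠ 0).card,
        d ((((B.filter fun x => d x ≠ 0).equivFin).symm i : ι)) = 2*m := by
      rw [Equiv.sum_comp ((B.filter fun x => d x ≠ 0).equivFin).symm
        (fun a : (B.filter fun x => d x ≠ 0) => d (a : ι)),
        Finset.sum_coe_sort _ _]
      exact hsum
    have hkpos : 1 ≤ (B.filter fun x => d x ≠ 0).card := by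
      rcases Finset.eq_empty_or_nonempty (B.filter fun x => d x ≠ 0) with h | h
      · exfalso
        rw [h, Finset.sum_empty] at hsum
        omega
      · exact Finset.card_pos.2 h
    have hkle : (B.filter fun x => d x ≠ 0).card ≤ m := by
      have h2k := Finset.card_nsmul_le_sum (B.filter fun x => d x ≠ 0) d 2 hge2
      rw [hsum, smul_eq_mul] at h2k
      omega
    rw [hS, hφ, Finset.mem_sigma]
    refine ⟨Finset.mem_Icc.2 ⟨hkpos, hkle⟩, Finset.mem_product.2 ⟨?_, ?_⟩⟩
    · rw [Finset.mem_filter]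
      refine ⟨Finset.mem_univ _, ?_, ?_⟩
      · simp only [Fin.val_mk]
        rw [Finset.sum_congr rfl (fun i _ => hecast d hd i)]
        exact hsumfin
      · intro i
        simp only [Fin.val_mk]
        rw [hecast d hd i]
        exact hge2 _ (hfmem d i)
    · rw [Fintype.mem_piFinset]
      intro i
      exact (Finset.filter_subset _ _) (hfmem d i)
  -- injectivity via reconstruction
  have hR : ∀ d ∈ A, (fun x => ∑ i : Fin (φ d).1,
      if (φ d).2.2 i = x then ((φ d).2.1 i : ℕ) else 0) = d := by
    intro d hd
    obtain ⟨hsupp, _, _⟩ := hfacts d hd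
    funext x
    rw [hφ]; simp only [Fin.val_mk]
    rw [Finset.sum_congr rfl (fun i _ => by rw [hecast d hd i])]
    by_cases hx : x ∈ B.filter (fun x => d x ≠ 0)
    · set i0 := (B.filter fun x => d x ≠ 0).equivFin ⟨x, hx⟩ with hi0
      have hfi0 : ((((B.filter fun x => d x ≠ 0).equivFin).symm i0 : ι)) = x := by
        rw [hi0, Equiv.symm_apply_apply]
      have hiff : ∀ i, ((((B.filter fun x => d x ≠ 0).equivFin).symm i : ι)) = x ↔ i = i0 :=
        fun i => ⟨fun h => hfinj d (h.trans hfi0.symm), fun h => h ▸ hfi0⟩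
      rw [Finset.sum_congr rfl (fun i _ => by rw [if_congr (hiff i) rfl rfl])]
      rw [Finset.sum_ite_eq' Finset.univ i0
        (fun i => d ((((B.filter fun x => d x ≠ 0).equivFin).symm i : ι)))]
      rw [if_pos (Finset.mem_univ _), hfi0]
    · rw [Finset.sum_eq_zero, (hsupp x hx)]
      intro i _
      rw [if_neg]
      intro h
      exact hx (h ▸ hfmem d i)
  have hinj : ∀ d ∈ A, ∀ d' ∈ A, φ d = φ d' → d = d' := by
    intro d hd d' hd' h
    rw [← hR d hd, ← hR d' hd', h]
  -- Step 5 : the sum over A is bounded by the sum over S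
  have main2 : ∑ d ∈ A, ∏ x ∈ B.filter (fun x => d x ≠ 0), (g x ^ d x * M (d x))
      ≤ ∑ p ∈ S, t p := by
    calc ∑ d ∈ A, ∏ x ∈ B.filter (fun x => d x ≠ 0), (g x ^ d x * M (d x))
        = ∑ d ∈ A, t (φ d) := Finset.sum_congr rfl hterm
      _ = ∑ p ∈ A.image φ, t p := (Finset.sum_image hinj).symm
      _ ≤ ∑ p ∈ S, t p := by
          refine Finset.sum_le_sum_of_subset_of_nonneg ?_ (fun p _ _ => htnonneg p)
          intro p hp
          rw [Finset.mem_image] at hp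
          obtain ⟨d, hd, rfl⟩ := hp
          exact hmem d hd
  -- Step 6 : the sum over S equals the RHS sum
  have hRHS : ∑ p ∈ S, t p = ∑ k ∈ Finset.Icc 1 m,
      ∑ e ∈ (Finset.univ : Finset (Fin k → Fin (2*m+1))).filter
          (fun e => (∑ i, (e i : ℕ)) = 2*m ∧ ∀ i, 2 ≤ (e i : ℕ)),
        ∏ i : Fin k,
          ∑ x ∈ B, g x ^ (e i : ℕ) * (⨆ y ∈ B, |∫ ω, (Z y ω)^((e i : ℕ)) ∂P|) := by
    rw [hS, Finset.sum_sigma]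
    refine Finset.sum_congr rfl fun k _ => ?_
    rw [Finset.sum_product]
    refine Finset.sum_congr rfl fun e _ => ?_
    simp only [ht, hM]
    exact (Finset.prod_univ_sum (fun _ : Fin k => B)
      (fun i x => g x ^ (e i : ℕ) * (⨆ y ∈ B, |∫ ω, (Z y ω)^((e i : ℕ)) ∂P|))).symm
  -- final chain
  calc ∫ ω, (∑ x ∈ B, g x * Z x ω)^(2*m) ∂P
      = ∑ d ∈ A, (Nat.multinomial B d : ℝ) *
          ((∏ x ∈ B, g x ^ d x) * ∏ x ∈ B, ∫ ω, (Z x ω)^(d x) ∂P) := by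
        rw [key, hzero]
    _ ≤ ∑ d ∈ A, ((2*m).factorial : ℝ) *
          ∏ x ∈ B.filter (fun x => d x ≠ 0), (g x ^ d x * M (d x)) :=
        Finset.sum_le_sum hgoodbound
    _ = ((2*m).factorial : ℝ) *
          ∑ d ∈ A, ∏ x ∈ B.filter (fun x => d x ≠ 0), (g x ^ d x * M (d x)) :=
        (Finset.mul_sum _ _ _).symm
    _ ≤ ((2*m).factorial : ℝ) * ∑ p ∈ S, t p :=
        mul_le_mul_of_nonneg_left main2 (Nat.cast_nonneg _)
    _ = _ := by rw [hRHS]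
end
end

section
/- Assume d = 1 and that the environment satisfies: at most n/4 of the sites k \in \{-n-1,\dots,0\} have \tau_k > M, and at most n/4 of the sites k \in \{0,\dots,n+1\} have \tau_k > M, for some M > 0. Then \lambda_n \le 32 M^{2a} / (n \sum_{|x| \le n/4} \tau_x). -/
open Classical

noncomputable section

namespace Eig1Aux

variable (τ : ℤ → ℝ) (M : ℝ) (n : ℕ)

def good (j : ℤ) : Prop := τ j ≤ M ∧ τ (j+1) ≤ M

def cR (k : ℤ) : ℕ := ((Finset.Icc k (n:ℤ)).filter (fun j => good τ M j)).card

def cL (k : ℤ) : ℕ := ((Finset.Icc (-(n:ℤ)-1) (k-1)).filter (fun j => good τ M j)).card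

def tf (k : ℤ) : ℝ := min ((cL τ M n k : ℝ)/n) ((cR τ M n k : ℝ)/n)

lemma tf_nonneg (k : ℤ) : 0 ≤ tf τ M n k :=
  le_min (by positivity) (by positivity)

lemma tf_zero (k : ℤ) (hk : (n:ℤ) < |k|) : tf τ M n k = 0 := by
  rcases lt_abs.mp hk with h | h
  swap
  · have hcL : cL τ M n k = 0 := by
      rw [cL, Finset.card_eq_zero, Finset.filter_eq_empty_iff]
      intro j hj _
      simp only [Finset.mem_Icc] at hj
      omega
    rw [tf, hcL]
    simpa using min_eq_left (by positivity : (0:ℝ) ≤ (cR τ M n k : ℝ)/n)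
  · have hcR : cR τ M n k = 0 := by
      rw [cR, Finset.card_eq_zero, Finset.filter_eq_empty_iff]
      intro j hj _
      simp only [Finset.mem_Icc] at hj
      omega
    rw [tf, hcR]
    simpa using min_eq_right (by positivity : (0:ℝ) ≤ (cL τ M n k : ℝ)/n)

lemma cR_diff (k : ℤ) : cR τ M n (k+1) ≤ cR τ M n k ∧ cR τ M n k ≤ cR τ M n (k+1) + 1 := by
  constructor
  · apply Finset.card_le_card
    apply Finset.filter_subset_filter
    intro x hx; simp only [Finset.mem_Icc] at *; omega
  · calc cR τ M n k ≤ (insert k ((Finset.Icc (k+1) (n:ℤ)).filter (fun j => good τ M j))).card := by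
          apply Finset.card_le_card
          intro x hx
          simp only [Finset.mem_filter, Finset.mem_Icc, Finset.mem_insert] at *
          rcases hx with ⟨⟨h1, h2⟩, h3⟩
          rcases eq_or_lt_of_le h1 with h | h
          · exact Or.inl h.symm
          · exact Or.inr ⟨⟨by omega, h2⟩, h3⟩
      _ ≤ cR τ M n (k+1) + 1 := Finset.card_insert_le _ _

lemma cL_diff (k : ℤ) : cL τ M n k ≤ cL τ M n (k+1) ∧ cL τ M n (k+1) ≤ cL τ M n k + 1 := by
  constructor
  · apply Finset.card_le_card
    apply Finset.filter_subset_filter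
    intro x hx; simp only [Finset.mem_Icc] at *; omega
  · calc cL τ M n (k+1) ≤ (insert k ((Finset.Icc (-(n:ℤ)-1) (k-1)).filter (fun j => good τ M j))).card := by
          apply Finset.card_le_card
          intro x hx
          simp only [Finset.mem_filter, Finset.mem_Icc, Finset.mem_insert] at *
          rcases hx with ⟨⟨h1, h2⟩, h3⟩
          rcases eq_or_lt_of_le h2 with h | h
          · exact Or.inl (by omega)
          · exact Or.inr ⟨⟨h1, by omega⟩, h3⟩
      _ ≤ cL τ M n k + 1 := Finset.card_insert_le _ _

lemma tf_step_bad (k : ℤ) (hk : ¬ good τ M k) : tf τ M n (k+1) = tf τ M n k := by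
  have hR : cR τ M n (k+1) = cR τ M n k := by
    unfold cR
    congr 1
    ext x
    simp only [Finset.mem_filter, Finset.mem_Icc]
    constructor
    · rintro ⟨⟨h1, h2⟩, h3⟩; exact ⟨⟨by omega, h2⟩, h3⟩
    · rintro ⟨⟨h1, h2⟩, h3⟩
      refine ⟨⟨?_, h2⟩, h3⟩
      rcases eq_or_lt_of_le h1 with h | h
      · exact absurd h3 (h ▸ hk)
      · omega
  have hL : cL τ M n (k+1) = cL τ M n k := by
    unfold cL
    congr 1
    ext x
    simp only [Finset.mem_filter, Finset.mem_Icc]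
    constructor
    · rintro ⟨⟨h1, h2⟩, h3⟩
      refine ⟨⟨h1, ?_⟩, h3⟩
      rcases eq_or_lt_of_le h2 with h | h
      · exact absurd h3 (by rw [show x = k by omega]; exact hk)
      · omega
    · rintro ⟨⟨h1, h2⟩, h3⟩; exact ⟨⟨h1, by omega⟩, h3⟩
  rw [tf, tf, hR, hL]

lemma tf_step (hn : 1 ≤ n) (k : ℤ) : |tf τ M n (k+1) - tf τ M n k| ≤ 1/(n:ℝ) := by
  have hn' : (0:ℝ) < n := by exact_mod_cast (by omega : 0 < n)
  have h1 := cR_diff τ M n k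
  have h2 := cL_diff τ M n k
  refine (abs_min_sub_min_le_max _ _ _ _).trans (max_le ?_ ?_)
  · rw [div_sub_div_same, abs_div, abs_of_pos hn']
    gcongr
    have ha : (cL τ M n k : ℝ) ≤ cL τ M n (k+1) := by exact_mod_cast h2.1
    have hb : (cL τ M n (k+1) : ℝ) ≤ cL τ M n k + 1 := by exact_mod_cast h2.2
    rw [abs_le]; constructor <;> linarith
  · rw [div_sub_div_same, abs_div, abs_of_pos hn']
    gcongr
    have ha : (cR τ M n (k+1) : ℝ) ≤ cR τ M n k := by exact_mod_cast h1.1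
    have hb : (cR τ M n k : ℝ) ≤ cR τ M n (k+1) + 1 := by exact_mod_cast h1.2
    rw [abs_le]; constructor <;> linarith

lemma card_bad_le (s B : Finset ℤ)
    (h : ∀ j ∈ s, ¬ good τ M j → j ∈ B ∨ j + 1 ∈ B) :
    (s.filter (fun j => ¬ good τ M j)).card ≤ 2 * B.card := by
  have hsub : s.filter (fun j => ¬ good τ M j) ⊆ B ∪ B.image (fun x => x - 1) := by
    intro j hj
    simp only [Finset.mem_filter] at hj
    rcases h j hj.1 hj.2 with h1 | h1
    · exact Finset.mem_union_left _ h1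
    · exact Finset.mem_union_right _ (Finset.mem_image.2 ⟨j+1, h1, by ring⟩)
  calc (s.filter (fun j => ¬ good τ M j)).card
      ≤ (B ∪ B.image (fun x => x - 1)).card := Finset.card_le_card hsub
    _ ≤ B.card + (B.image (fun x => x - 1)).card := Finset.card_union_le _ _
    _ ≤ B.card + B.card := by
        have := Finset.card_image_le (s := B) (f := fun x => x - 1)
        omega
    _ = 2 * B.card := by ring

lemma cR_lower (hn : 1 ≤ n)
    (hright : (((Finset.Icc (0:ℤ) ((n:ℤ)+1)).filter (fun k => M < τ k)).card : ℝ)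
        ≤ (n : ℝ)/4)
    (k : ℤ) (hk0 : 0 ≤ k) (hk : (k:ℝ) ≤ (n:ℝ)/4) :
    (n:ℝ)/4 + 1 ≤ (cR τ M n k : ℝ) := by
  have hn' : (0:ℝ) < n := by exact_mod_cast (by omega : 0 < n)
  have hkn : k ≤ (n:ℤ) := by exact_mod_cast (by linarith : (k:ℝ) ≤ (n:ℝ))
  have hbad := card_bad_le τ M (Finset.Icc k (n:ℤ))
      ((Finset.Icc (0:ℤ) ((n:ℤ)+1)).filter (fun k => M < τ k)) (by
    intro j hj hg
    simp only [Finset.mem_Icc] at hj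
    rw [good, not_and_or, not_le, not_le] at hg
    rcases hg with h1 | h1
    · exact Or.inl (Finset.mem_filter.2 ⟨Finset.mem_Icc.2 ⟨by omega, by omega⟩, h1⟩)
    · exact Or.inr (Finset.mem_filter.2 ⟨Finset.mem_Icc.2 ⟨by omega, by omega⟩, h1⟩))
  have hsplit := Finset.card_filter_add_card_filter_not
      (s := Finset.Icc k (n:ℤ)) (p := fun j => good τ M j)
  have htot : ((Finset.Icc k (n:ℤ)).card : ℝ) = (n:ℝ) + 1 - k := by
    have := Int.card_Icc_of_le (a := k) (b := (n:ℤ)) (by omega)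
    exact_mod_cast this
  have hbad' : (((Finset.Icc k (n:ℤ)).filter (fun j => ¬ good τ M j)).card : ℝ)
      ≤ 2 * ((n:ℝ)/4) := by
    calc (((Finset.Icc k (n:ℤ)).filter (fun j => ¬ good τ M j)).card : ℝ)
        ≤ 2 * (((Finset.Icc (0:ℤ) ((n:ℤ)+1)).filter (fun k => M < τ k)).card : ℝ) := by
          exact_mod_cast hbad
      _ ≤ 2 * ((n:ℝ)/4) := by linarith
  have : (cR τ M n k : ℝ)
      + (((Finset.Icc k (n:ℤ)).filter (fun j => ¬ good τ M j)).card : ℝ)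
      = ((Finset.Icc k (n:ℤ)).card : ℝ) := by
    rw [cR]; exact_mod_cast hsplit
  rw [htot] at this
  linarith

lemma cL_lower (hn : 1 ≤ n)
    (hleft : (((Finset.Icc (-(n:ℤ)-1) 0).filter (fun k => M < τ k)).card : ℝ)
        ≤ (n : ℝ)/4)
    (k : ℤ) (hk0 : k ≤ 0) (hk : -((n:ℝ)/4) ≤ (k:ℝ)) :
    (n:ℝ)/4 + 1 ≤ (cL τ M n k : ℝ) := by
  have hn' : (0:ℝ) < n := by exact_mod_cast (by omega : 0 < n)
  have hkn : -(n:ℤ) ≤ k := by exact_mod_cast (by linarith : -(n:ℝ) ≤ (k:ℝ))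
  have hbad := card_bad_le τ M (Finset.Icc (-(n:ℤ)-1) (k-1))
      ((Finset.Icc (-(n:ℤ)-1) 0).filter (fun k => M < τ k)) (by
    intro j hj hg
    simp only [Finset.mem_Icc] at hj
    rw [good, not_and_or, not_le, not_le] at hg
    rcases hg with h1 | h1
    · exact Or.inl (Finset.mem_filter.2 ⟨Finset.mem_Icc.2 ⟨by omega, by omega⟩, h1⟩)
    · exact Or.inr (Finset.mem_filter.2 ⟨Finset.mem_Icc.2 ⟨by omega, by omega⟩, h1⟩))
  have hsplit := Finset.card_filter_add_card_filter_not
      (s := Finset.Icc (-(n:ℤ)-1) (k-1)) (p := fun j => good τ M j)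
  have htot : ((Finset.Icc (-(n:ℤ)-1) (k-1)).card : ℝ) = (n:ℝ) + 1 + k := by
    have := Int.card_Icc_of_le (a := -(n:ℤ)-1) (b := k-1) (by omega)
    have h2 : ((Finset.Icc (-(n:ℤ)-1) (k-1)).card : ℤ) = k + (n:ℤ) + 1 := by omega
    have h3 : (((Finset.Icc (-(n:ℤ)-1) (k-1)).card : ℤ) : ℝ) = ((k + (n:ℤ) + 1 : ℤ) : ℝ) := by
      exact_mod_cast h2
    push_cast at h3 ⊢
    linarith
  have hbad' : (((Finset.Icc (-(n:ℤ)-1) (k-1)).filter (fun j => ¬ good τ M j)).card : ℝ)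
      ≤ 2 * ((n:ℝ)/4) := by
    calc (((Finset.Icc (-(n:ℤ)-1) (k-1)).filter (fun j => ¬ good τ M j)).card : ℝ)
        ≤ 2 * (((Finset.Icc (-(n:ℤ)-1) 0).filter (fun k => M < τ k)).card : ℝ) := by
          exact_mod_cast hbad
      _ ≤ 2 * ((n:ℝ)/4) := by linarith
  have : (cL τ M n k : ℝ)
      + (((Finset.Icc (-(n:ℤ)-1) (k-1)).filter (fun j => ¬ good τ M j)).card : ℝ)
      = ((Finset.Icc (-(n:ℤ)-1) (k-1)).card : ℝ) := by
    rw [cL]; exact_mod_cast hsplit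
  rw [htot] at this
  linarith

lemma cL_mono {k k' : ℤ} (h : k ≤ k') : cL τ M n k ≤ cL τ M n k' := by
  apply Finset.card_le_card
  apply Finset.filter_subset_filter
  intro x hx; simp only [Finset.mem_Icc] at *; omega

lemma cR_anti {k k' : ℤ} (h : k ≤ k') : cR τ M n k' ≤ cR τ M n k := by
  apply Finset.card_le_card
  apply Finset.filter_subset_filter
  intro x hx; simp only [Finset.mem_Icc] at *; omega

lemma tf_lower (hn : 1 ≤ n)
    (hleft : (((Finset.Icc (-(n:ℤ)-1) 0).filter (fun k => M < τ k)).card : ℝ)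
        ≤ (n : ℝ)/4)
    (hright : (((Finset.Icc (0:ℤ) ((n:ℤ)+1)).filter (fun k => M < τ k)).card : ℝ)
        ≤ (n : ℝ)/4)
    (k : ℤ) (hk : ((|k| : ℤ) : ℝ) ≤ (n:ℝ)/4) :
    ((n:ℝ)/4 + 1)/(n:ℝ) ≤ tf τ M n k := by
  have hn' : (0:ℝ) < n := by exact_mod_cast (by omega : 0 < n)
  have habs : |(k:ℝ)| ≤ (n:ℝ)/4 := by
    rw [← Int.cast_abs]; exact hk
  rw [abs_le] at habs
  have hL : (n:ℝ)/4 + 1 ≤ (cL τ M n k : ℝ) := by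
    rcases le_or_gt k 0 with h | h
    · exact cL_lower τ M n hn hleft k h habs.1
    · calc (n:ℝ)/4 + 1 ≤ (cL τ M n 0 : ℝ) :=
          cL_lower τ M n hn hleft 0 le_rfl (by push_cast; linarith)
        _ ≤ (cL τ M n k : ℝ) := by exact_mod_cast cL_mono τ M n h.le
  have hR : (n:ℝ)/4 + 1 ≤ (cR τ M n k : ℝ) := by
    rcases le_or_gt 0 k with h | h
    · exact cR_lower τ M n hn hright k h habs.2
    · calc (n:ℝ)/4 + 1 ≤ (cR τ M n 0 : ℝ) :=
          cR_lower τ M n hn hright 0 le_rfl (by push_cast; linarith)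
        _ ≤ (cR τ M n k : ℝ) := by exact_mod_cast cR_anti τ M n h.le
  exact le_min (by gcongr) (by gcongr)

end Eig1Aux

/-- One-dimensional Dirichlet form `ℰ(f,f) = ∑_k τ_k^a τ_{k+1}^a (f(k+1)-f(k))²`. -/
def dirForm1 (a : ℝ) (τ : ℤ → ℝ) (f : ℤ → ℝ) : ℝ :=
  ∑ᶠ k : ℤ, τ k ^ a * τ (k+1) ^ a * (f (k+1) - f k)^2

/-- Principal Dirichlet eigenvalue on `{-n,…,n} ⊆ ℤ`. -/
def eig1 (a : ℝ) (τ : ℤ → ℝ) (n : ℕ) : ℝ :=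
  sInf {r | ∃ f : ℤ → ℝ,
    (∀ k : ℤ, (n : ℤ) < |k| → f k = 0) ∧ f ≠ 0 ∧
    r = dirForm1 a τ f / ∑ᶠ k : ℤ, f k ^ 2 * τ k}

set_option maxHeartbeats 1000000 in
/-- in dimension one, if at most `n/4` sites of `{-n-1,…,0}` and
at most `n/4` sites of `{0,…,n+1}` have `τ_k > M`, then
`λ_n ≤ 32 M^{2a} / (n ∑_{|x| ≤ n/4} τ_x)`. -/
theorem eig1_upper_bound (a : ℝ) (ha : a ∈ Set.Icc (0:ℝ) 1)
    (τ : ℤ → ℝ) (hτ : ∀ k, 1 ≤ τ k) (M : ℝ) (hM : 0 < M)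
    (n : ℕ) (hn : 1 ≤ n)
    (hleft : (((Finset.Icc (-(n:ℤ)-1) 0).filter (fun k => M < τ k)).card : ℝ)
        ≤ (n : ℝ)/4)
    (hright : (((Finset.Icc (0:ℤ) ((n:ℤ)+1)).filter (fun k => M < τ k)).card : ℝ)
        ≤ (n : ℝ)/4) :
    eig1 a τ n ≤ 32 * M ^ (2*a)
      / ((n : ℝ) * ∑ k ∈ (Finset.Icc (-(n:ℤ)) (n:ℤ)).filter
          (fun k => ((|k| : ℤ) : ℝ) ≤ (n:ℝ)/4), τ k) := by
  have ha0 : 0 ≤ a := ha.1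
  have hn' : (0:ℝ) < n := by exact_mod_cast (by omega : 0 < n)
  set f : ℤ → ℝ := Eig1Aux.tf τ M n with hf
  set c : ℝ := ((n:ℝ)/4 + 1)/(n:ℝ) with hc
  have hc0 : 0 < c := by positivity
  set T : Finset ℤ := (Finset.Icc (-(n:ℤ)) (n:ℤ)).filter
      (fun k => ((|k| : ℤ) : ℝ) ≤ (n:ℝ)/4) with hT
  set S : ℝ := ∑ k ∈ T, τ k with hS
  have hτ0 : ∀ k, (0:ℝ) ≤ τ k := fun k => le_trans zero_le_one (hτ k)
  have h0T : (0:ℤ) ∈ T := by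
    rw [hT, Finset.mem_filter, Finset.mem_Icc]
    refine ⟨⟨by omega, by omega⟩, by norm_num; positivity⟩
  have hS0 : 0 < S := by
    have h1 : τ 0 ≤ S := Finset.single_le_sum (fun k _ => hτ0 k) h0T
    linarith [hτ 0]
  have hP : 0 < M ^ (2*a) := Real.rpow_pos_of_pos hM _
  -- f vanishes outside
  have hvan : ∀ k : ℤ, (n : ℤ) < |k| → f k = 0 := fun k hk => Eig1Aux.tf_zero τ M n k hk
  -- lower bound on f on T
  have hflow : ∀ k ∈ T, c ≤ f k := by
    intro k hk
    rw [hT, Finset.mem_filter] at hk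
    exact Eig1Aux.tf_lower τ M n hn hleft hright k hk.2
  -- f ≠ 0
  have hfne : f ≠ 0 := by
    intro h
    have := hflow 0 h0T
    rw [h] at this
    simp at this
    linarith
  -- numerator bound
  set g : ℤ → ℝ := fun k => τ k ^ a * τ (k+1) ^ a * (f (k+1) - f k)^2 with hg
  have hgnonneg : ∀ k, 0 ≤ g k := by
    intro k
    exact mul_nonneg (mul_nonneg (Real.rpow_nonneg (hτ0 k) a)
      (Real.rpow_nonneg (hτ0 (k+1)) a)) (sq_nonneg _)
  have hEsum : dirForm1 a τ f = ∑ k ∈ Finset.Icc (-(n:ℤ)-1) (n:ℤ), g k := by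
    apply finsum_eq_sum_of_support_subset
    intro k hk
    simp only [Function.mem_support, hg] at hk
    by_contra hmem
    simp only [Finset.coe_Icc, Set.mem_Icc, not_and_or, not_le] at hmem
    apply hk
    have hz : f (k+1) - f k = 0 := by
      rcases hmem with h | h
      · rw [hvan k (lt_abs.mpr (Or.inr (by omega))),
            hvan (k+1) (lt_abs.mpr (Or.inr (by omega)))]; ring
      · rw [hvan k (lt_abs.mpr (Or.inl (by omega))),
            hvan (k+1) (lt_abs.mpr (Or.inl (by omega)))]; ring
    rw [hz]; ring
  have hcard : ((Finset.Icc (-(n:ℤ)-1) (n:ℤ)).card : ℝ) = 2*(n:ℝ) + 2 := by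
    have h1 : ((Finset.Icc (-(n:ℤ)-1) (n:ℤ)).card : ℤ) = 2*(n:ℤ) + 2 := by
      rw [Int.card_Icc]; omega
    exact_mod_cast h1
  have hterm : ∀ k ∈ Finset.Icc (-(n:ℤ)-1) (n:ℤ), g k ≤ M ^ (2*a) * (1/(n:ℝ))^2 := by
    intro k _
    by_cases hgood : Eig1Aux.good τ M k
    · have h1 : τ k ^ a ≤ M ^ a := Real.rpow_le_rpow (hτ0 k) hgood.1 ha0
      have h2 : τ (k+1) ^ a ≤ M ^ a := Real.rpow_le_rpow (hτ0 (k+1)) hgood.2 ha0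
      have h3 : (f (k+1) - f k)^2 ≤ (1/(n:ℝ))^2 := by
        have := Eig1Aux.tf_step τ M n hn k
        rw [abs_le] at this
        exact sq_le_sq' this.1 this.2
      have h4 : M ^ a * M ^ a = M ^ (2*a) := by
        rw [← Real.rpow_add hM]; ring_nf
      calc g k ≤ M ^ a * M ^ a * (1/(n:ℝ))^2 := by
            rw [hg]
            refine mul_le_mul (mul_le_mul h1 h2 (Real.rpow_nonneg (hτ0 (k+1)) a)
              (Real.rpow_nonneg hM.le a)) h3 (sq_nonneg _) (by positivity)
        _ = M ^ (2*a) * (1/(n:ℝ))^2 := by rw [h4]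
    · have heq := Eig1Aux.tf_step_bad τ M n k hgood
      rw [hg]
      simp only [hf]
      rw [heq, sub_self]
      have hnn : (0:ℝ) ≤ M ^ (2*a) * (1/(n:ℝ))^2 := by positivity
      simpa using hnn
  have hE : dirForm1 a τ f ≤ (2*(n:ℝ) + 2) * (M ^ (2*a) * (1/(n:ℝ))^2) := by
    rw [hEsum]
    calc ∑ k ∈ Finset.Icc (-(n:ℤ)-1) (n:ℤ), g k
        ≤ ∑ k ∈ Finset.Icc (-(n:ℤ)-1) (n:ℤ), M ^ (2*a) * (1/(n:ℝ))^2 :=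
          Finset.sum_le_sum hterm
      _ = ((Finset.Icc (-(n:ℤ)-1) (n:ℤ)).card : ℝ) * (M ^ (2*a) * (1/(n:ℝ))^2) := by
          rw [Finset.sum_const, nsmul_eq_mul]
      _ = (2*(n:ℝ) + 2) * (M ^ (2*a) * (1/(n:ℝ))^2) := by rw [hcard]
  -- denominator bound
  have hDsum : ∑ᶠ k : ℤ, f k ^ 2 * τ k = ∑ k ∈ Finset.Icc (-(n:ℤ)) (n:ℤ), f k ^ 2 * τ k := by
    apply finsum_eq_sum_of_support_subset
    intro k hk
    simp only [Function.mem_support] at hk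
    by_contra hmem
    simp only [Finset.coe_Icc, Set.mem_Icc, not_and_or, not_le] at hmem
    apply hk
    have hfk : f k = 0 := by
      rcases hmem with h | h
      · exact hvan k (lt_abs.mpr (Or.inr (by omega)))
      · exact hvan k (lt_abs.mpr (Or.inl (by omega)))
    rw [hfk]; ring
  have hD : c^2 * S ≤ ∑ᶠ k : ℤ, f k ^ 2 * τ k := by
    rw [hDsum]
    calc c^2 * S = ∑ k ∈ T, c^2 * τ k := by rw [hS, Finset.mul_sum]
      _ ≤ ∑ k ∈ T, f k ^ 2 * τ k := by
          apply Finset.sum_le_sum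
          intro k hk
          have h1 : c ≤ f k := hflow k hk
          have h2 : c^2 ≤ f k ^ 2 := by nlinarith
          exact mul_le_mul_of_nonneg_right h2 (hτ0 k)
      _ ≤ ∑ k ∈ Finset.Icc (-(n:ℤ)) (n:ℤ), f k ^ 2 * τ k := by
          apply Finset.sum_le_sum_of_subset_of_nonneg (Finset.filter_subset _ _)
          intro k _ _
          exact mul_nonneg (sq_nonneg _) (hτ0 k)
  have hD0 : 0 < ∑ᶠ k : ℤ, f k ^ 2 * τ k := lt_of_lt_of_le (by positivity) hD
  -- membership & inf
  set Q : Set ℝ := {r | ∃ f : ℤ → ℝ,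
    (∀ k : ℤ, (n : ℤ) < |k| → f k = 0) ∧ f ≠ 0 ∧
    r = dirForm1 a τ f / ∑ᶠ k : ℤ, f k ^ 2 * τ k} with hQ
  have hmem : (dirForm1 a τ f / ∑ᶠ k : ℤ, f k ^ 2 * τ k) ∈ Q := ⟨f, hvan, hfne, rfl⟩
  have hbdd : BddBelow Q := by
    refine ⟨0, fun r hr => ?_⟩
    obtain ⟨f', _, _, rfl⟩ := hr
    apply div_nonneg
    · apply finsum_nonneg
      intro k
      exact mul_nonneg (mul_nonneg (Real.rpow_nonneg (hτ0 k) a)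
        (Real.rpow_nonneg (hτ0 (k+1)) a)) (sq_nonneg _)
    · apply finsum_nonneg
      intro k
      exact mul_nonneg (sq_nonneg _) (hτ0 k)
  refine le_trans (csInf_le hbdd hmem) ?_
  -- final arithmetic
  calc dirForm1 a τ f / ∑ᶠ k : ℤ, f k ^ 2 * τ k
      ≤ ((2*(n:ℝ) + 2) * (M ^ (2*a) * (1/(n:ℝ))^2)) / (c^2 * S) := by
        apply div_le_div₀ (by positivity) hE (by positivity) hD
    _ ≤ 32 * M ^ (2*a) / ((n : ℝ) * S) := by
        rw [div_le_div_iff₀ (by positivity) (by positivity)]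
        have hkey : (2*(n:ℝ) + 2) * (n:ℝ) ≤ 32 * ((n:ℝ)/4 + 1)^2 := by nlinarith
        have hcc : c^2 = ((n:ℝ)/4 + 1)^2 / (n:ℝ)^2 := by rw [hc]; ring
        rw [hcc]
        field_simp
        nlinarith [mul_pos hP hS0, sq_nonneg ((n:ℝ) - 1), hS0, hP,
          mul_nonneg (mul_nonneg hP.le hS0.le) hn'.le,
          mul_le_mul_of_nonneg_right hkey (mul_nonneg hP.le hS0.le)]
end
end
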